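/- Let n, m, t be positive integers and ε > 0, ε′ ≥ 0, δ ≥ 0, δ₀ ≥ 0 reals with ε′ + δ₀ < 1/2. Suppose f : {0,1}^n → ℝ is (ε,δ₀)-concentrated at μ ∈ ℝ and Samp : {0,1}^m → ({0,1}^n)^t is an averaging (ε′,δ)-sampler for Boolean functions on n bits. Define g : {0,1}^m → ℝ by letting g(x) be the ⌈(t+1)/2⌉-th smallest element, counted with multiplicity, of the list (f(Samp(x)_1),…,f(Samp(x)_t)). Then g is (ε,δ)-concentrated at μ. -/

import Mathlib

open Classical

/-- Probability of `P` under the uniform distribution on a finite type. -/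
noncomputable def pr {α : Type*} [Fintype α] (P : α → Prop) : ℝ :=
  ((Finset.univ.filter P).card : ℝ) / (Fintype.card α : ℝ)

/-- `f : {0,1}^n → ℝ` is `(ε,δ)`-concentrated at `μ`. -/
def Concentrated1 (n : ℕ) (ε δ : ℝ) (f : (Fin n → Bool) → ℝ) (μ : ℝ) : Prop :=
  pr (fun X : Fin n → Bool => |f X - μ| > ε) ≤ δ

/-- `Samp` is an averaging `(ε,δ)`-sampler for Boolean functions on `n` bits. -/
def IsAvgSampler (n m t : ℕ) (ε δ : ℝ)
    (Samp : (Fin m → Bool) → Fin t → (Fin n → Bool)) : Prop :=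
  ∀ C : (Fin n → Bool) → Bool,
    pr (fun X : Fin m → Bool =>
      |(∑ x : Fin n → Bool, if C x then (1 : ℝ) else 0) / 2 ^ n
        - (∑ i : Fin t, if C (Samp X i) then (1 : ℝ) else 0) / t| > ε) ≤ δ

open Classical in
/-- The `⌈(t+1)/2⌉`-th smallest element (counted with multiplicity) of a list of
length `t` of reals; i.e. the element at 0-based index `t/2` of the sorted list. -/
noncomputable def medianList (l : List ℝ) : ℝ :=
  (l.insertionSort (fun a b => a ≤ b)).getD (l.length / 2) 0

lemma sorted_getD_ge {s : List ℝ} (hs : s.Pairwise (· ≤ ·)) {i : ℕ} (hi : i < s.length)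
    {v : ℝ} (hc : (s.filter (fun a => decide (a < v))).length ≤ i) :
    v ≤ s.getD i 0 := by
  rw [List.getD_eq_getElem _ _ hi]
  by_contra h
  push_neg at h
  have htake : ∀ a ∈ s.take (i+1), a < v := by
    intro a ha
    rw [List.mem_take_iff_getElem] at ha
    obtain ⟨j, hj, rfl⟩ := ha
    have hj' : j < s.length := lt_of_lt_of_le hj (by omega)
    have hji : j ≤ i := by omega
    calc s[j] ≤ s[i] := hs.rel_get_of_le (a := ⟨j, hj'⟩) (b := ⟨i, hi⟩) hji
    _ < v := h
  have h1 : (s.take (i+1)).filter (fun a => decide (a < v)) = s.take (i+1) :=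
    List.filter_eq_self.mpr (fun a ha => by simpa using htake a ha)
  have h2 : ((s.take (i+1)).filter (fun a => decide (a < v))).length
      ≤ (s.filter (fun a => decide (a < v))).length :=
    ((s.take_sublist (i+1)).filter _).length_le
  rw [h1, List.length_take] at h2
  omega

lemma sorted_getD_le {s : List ℝ} (hs : s.Pairwise (· ≤ ·)) {i : ℕ} (hi : i < s.length)
    {v : ℝ} (hc : i + 1 ≤ (s.filter (fun a => decide (a ≤ v))).length) :
    s.getD i 0 ≤ v := by
  rw [List.getD_eq_getElem _ _ hi]
  by_contra h
  push_neg at h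
  have hdrop : ∀ a ∈ s.drop i, v < a := by
    intro a ha
    rw [List.mem_drop_iff_getElem] at ha
    obtain ⟨j, hj, rfl⟩ := ha
    calc v < s[i] := h
    _ ≤ s[i+j] := hs.rel_get_of_le (a := ⟨i, hi⟩) (b := ⟨i+j, by omega⟩)
      (Fin.mk_le_mk.mpr (by omega))
  have h1 : (s.drop i).filter (fun a => decide (v < a)) = s.drop i :=
    List.filter_eq_self.mpr (fun a ha => by simpa using hdrop a ha)
  have h2 : ((s.drop i).filter (fun a => decide (v < a))).length
      ≤ (s.filter (fun a => decide (v < a))).length :=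
    ((s.drop_sublist i).filter _).length_le
  rw [h1, List.length_drop] at h2
  have h3 : (s.filter (fun a => decide (a ≤ v))).length
      + (s.filter (fun a => decide (v < a))).length = s.length := by
    rw [← List.countP_eq_length_filter, ← List.countP_eq_length_filter]
    rw [List.length_eq_countP_add_countP (fun a => decide (a ≤ v))]
    congr 1
    apply List.countP_congr
    intro a _
    simp [not_le]
  omega

lemma median_close (μ ε : ℝ) {l : List ℝ}
    (h : 2 * l.countP (fun a => decide (ε < |a - μ|)) < l.length) :
    |medianList l - μ| ≤ ε := by
  set s := l.insertionSort (fun a b => a ≤ b) with hsdef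
  have hperm : s.Perm l := l.perm_insertionSort _
  have hsort : s.Pairwise (· ≤ ·) := l.pairwise_insertionSort _
  have hlen : s.length = l.length := hperm.length_eq
  have hBs : s.countP (fun a => decide (ε < |a - μ|)) = l.countP (fun a => decide (ε < |a - μ|)) :=
    hperm.countP_eq _
  have hi : l.length / 2 < s.length := by omega
  have hlow : μ - ε ≤ s.getD (l.length / 2) 0 := by
    apply sorted_getD_ge hsort hi
    rw [← List.countP_eq_length_filter]
    have hm : s.countP (fun a => decide (a < μ - ε)) ≤ s.countP (fun a => decide (ε < |a - μ|)) :=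
      List.countP_mono_left (fun a _ ha => by
        simp only [decide_eq_true_eq] at ha ⊢
        rw [abs_sub_comm]
        calc ε < μ - a := by linarith
        _ ≤ |μ - a| := le_abs_self _)
    omega
  have hup : s.getD (l.length / 2) 0 ≤ μ + ε := by
    apply sorted_getD_le hsort hi
    rw [← List.countP_eq_length_filter]
    have h1 := List.length_eq_countP_add_countP (fun a => decide (ε < |a - μ|)) (l := s)
    have h2 : s.countP (fun a => ¬ (decide (ε < |a - μ|)))
        ≤ s.countP (fun a => decide (a ≤ μ + ε)) :=
      List.countP_mono_left (fun a _ ha => by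
        simp only [decide_eq_true_eq, Bool.not_eq_true', decide_eq_false_iff_not, not_lt] at ha ⊢
        have := le_abs_self (a - μ)
        linarith [abs_le.mp ha])
    omega
  have hmed : medianList l = s.getD (l.length / 2) 0 := rfl
  rw [hmed, abs_le]
  constructor <;> linarith

lemma pr_mono {α : Type*} [Fintype α] {P Q : α → Prop} (h : ∀ a, P a → Q a) :
    pr P ≤ pr Q := by
  unfold pr
  rcases Nat.eq_zero_or_pos (Fintype.card α) with h0 | h0
  · simp [h0]
  · rw [div_le_div_iff_of_pos_right (by exact_mod_cast h0)]
    exact_mod_cast Finset.card_le_card (fun a ha => by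
      simp only [Finset.mem_filter, Finset.mem_univ, true_and] at ha ⊢
      exact h a ha)

lemma pr_congr {α : Type*} [Fintype α] {P Q : α → Prop} (h : ∀ a, P a ↔ Q a) :
    pr P = pr Q :=
  le_antisymm (pr_mono fun a => (h a).1) (pr_mono fun a => (h a).2)

lemma countP_ofFn {α : Type*} {t : ℕ} (g : Fin t → α) (q : α → Bool) :
    ((List.ofFn g).countP q : ℝ) = ∑ i : Fin t, if q (g i) then (1 : ℝ) else 0 := by
  induction t with
  | zero => simp
  | succ k ih =>
    rw [List.ofFn_succ, List.countP_cons, Fin.sum_univ_succ, Nat.cast_add,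
      ih (fun i => g i.succ)]
    by_cases h : q (g 0) <;> simp [h] <;> ring

lemma pr_eq_sum {n : ℕ} (C : (Fin n → Bool) → Bool) :
    pr (fun x : Fin n → Bool => C x = true)
      = (∑ x : Fin n → Bool, if C x then (1 : ℝ) else 0) / 2 ^ n := by
  unfold pr
  rw [Finset.sum_boole]
  congr 1
  · congr 2
    ext x
    simp
  · simp [Fintype.card_fun]

/-- taking the median of `f` over the sample points of an averaging
`(ε′,δ)`-sampler turns an `(ε,δ₀)`-concentrated function into an `(ε,δ)`-concentrated one,
provided `ε′ + δ₀ < 1/2`. -/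
theorem median_amplification (n m t : ℕ) (hn : 0 < n) (hm : 0 < m) (ht : 0 < t)
    (ε ε' δ δ₀ : ℝ) (hε : 0 < ε) (hε' : 0 ≤ ε') (hδ : 0 ≤ δ) (hδ₀ : 0 ≤ δ₀)
    (hlt : ε' + δ₀ < 1 / 2)
    (f : (Fin n → Bool) → ℝ) (μ : ℝ) (hf : Concentrated1 n ε δ₀ f μ)
    (Samp : (Fin m → Bool) → Fin t → (Fin n → Bool))
    (hS : IsAvgSampler n m t ε' δ Samp) :
    Concentrated1 m ε δ
      (fun x => medianList (List.ofFn fun i => f (Samp x i))) μ := by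
  set C : (Fin n → Bool) → Bool := fun x => decide (ε < |f x - μ|) with hC
  have hμC : (∑ x : Fin n → Bool, if C x then (1 : ℝ) else 0) / 2 ^ n ≤ δ₀ := by
    rw [← pr_eq_sum]
    have heq : pr (fun x : Fin n → Bool => C x = true)
        = pr (fun X : Fin n → Bool => |f X - μ| > ε) := by
      apply pr_congr
      intro a
      simp [hC, gt_iff_lt]
    rw [heq]
    exact hf
  unfold Concentrated1
  refine le_trans (pr_mono ?_) (hS C)
  intro x hx
  by_contra hb
  apply absurd hx
  apply not_lt.mpr
  have hb' := abs_le.mp (not_lt.mp hb)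
  have ht' : (0 : ℝ) < t := by exact_mod_cast ht
  set l : List ℝ := List.ofFn fun i => f (Samp x i) with hl
  have hcnt : ((l.countP fun a => decide (ε < |a - μ|)) : ℝ)
      = ∑ i : Fin t, if C (Samp x i) then (1 : ℝ) else 0 :=
    countP_ofFn (fun i => f (Samp x i)) (fun a => decide (ε < |a - μ|))
  have hA : (∑ i : Fin t, if C (Samp x i) then (1 : ℝ) else 0) / t < 1 / 2 := by
    have : (∑ i : Fin t, if C (Samp x i) then (1 : ℝ) else 0) / t
        ≤ (∑ x : Fin n → Bool, if C x then (1 : ℝ) else 0) / 2 ^ n + ε' := by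
      linarith [hb'.1, hb'.2]
    linarith
  have hsum : (∑ i : Fin t, if C (Samp x i) then (1 : ℝ) else 0) < t / 2 := by
    rw [div_lt_iff₀ ht'] at hA
    linarith
  have hcount : 2 * (l.countP fun a => decide (ε < |a - μ|)) < l.length := by
    rw [hl, List.length_ofFn]
    have : 2 * ((l.countP fun a => decide (ε < |a - μ|)) : ℝ) < t := by
      rw [hcnt]; linarith
    exact_mod_cast this
  exact median_close μ ε hcount
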